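/- arXiv:2408.07156 — 2 statements merged into one kernel-verified Lean document; each statement's English description precedes it below -/
import Mathlib

section
/- Let {vᵢ}_{i∈I} be an orthonormal basis of V indexed by a linearly ordered set I, and for a finite subset S = {i₁ < ⋯ < i_r} ⊆ I write v_S = v_{i₁}⋯v_{i_r}. If a finite linear combination ∑_S α_S ad(v_S) of inner derivations (with S ranging over finite nonempty subsets of even cardinality) is the zero derivation of Cℓ(V,f), then all coefficients α_S are zero. -/
/-- The ordered product `v_S = v_{i₁} ⋯ v_{i_r}` in the Clifford algebra,
for `S = {i₁ < ⋯ < i_r}`. -/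
def cliffordFinsetProd {F V I : Type*} [Field F] [AddCommGroup V] [Module F V]
    [LinearOrder I] (f : QuadraticForm F V) (v : I → V) (S : Finset I) :
    CliffordAlgebra f :=
  ((S.sort (· ≤ ·)).map fun i => CliffordAlgebra.ι f (v i)).prod

section Aux

variable {F I : Type*} [Field F] [LinearOrder I]

open Finset

/-- The fermionic creation/annihilation operator `e_T ↦ ± e_{T Δ {i}}`. -/
noncomputable def gOp (F : Type*) [Field F] {I : Type*} [LinearOrder I] (i : I) :
    Module.End F (Finset I →₀ F) :=
  Finsupp.lift (Finset I →₀ F) F (Finset I) fun T =>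
    ((-1 : F) ^ (T.filter (· < i)).card) • Finsupp.single (symmDiff T {i}) (1 : F)

lemma gOp_single (i : I) (T : Finset I) (c : F) :
    gOp F i (Finsupp.single T c) =
      (c * (-1 : F) ^ (T.filter (· < i)).card) • Finsupp.single (symmDiff T {i}) (1 : F) := by
  simp [gOp, Finsupp.sum_single_index, mul_smul]

lemma filter_symmDiff_of_not_lt {k m : I} (h : ¬ k < m) (T : Finset I) :
    (symmDiff T {k}).filter (· < m) = T.filter (· < m) := by
  ext a
  by_cases hak : a = k
  · subst hak
    simp only [Finset.mem_filter, Finset.mem_symmDiff, Finset.mem_singleton]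
    constructor
    · rintro ⟨-, ha⟩; exact absurd ha h
    · rintro ⟨-, ha⟩; exact absurd ha h
  · simp only [Finset.mem_filter, Finset.mem_symmDiff, Finset.mem_singleton, hak]
    tauto

lemma filter_symmDiff_of_lt {i j : I} (hij : i < j) (T : Finset I) :
    (symmDiff T {i}).filter (· < j) = symmDiff (T.filter (· < j)) {i} := by
  ext a
  by_cases hai : a = i
  · subst hai
    simp only [Finset.mem_filter, Finset.mem_symmDiff, Finset.mem_singleton, hij, and_true]
    try tauto
  · simp only [Finset.mem_filter, Finset.mem_symmDiff, Finset.mem_singleton, hai]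
    tauto

lemma neg_one_pow_card_symmDiff (i : I) (A : Finset I) :
    ((-1 : F) ^ (symmDiff A {i}).card) = - (-1 : F) ^ A.card := by
  by_cases hi : i ∈ A
  · have hA : symmDiff A {i} = A.erase i := by
      ext a
      by_cases hai : a = i
      · subst hai; simp [Finset.mem_symmDiff, hi]
      · simp [Finset.mem_symmDiff, hai]
    rw [hA, Finset.card_erase_of_mem hi]
    have h1 : 1 ≤ A.card := Finset.card_pos.mpr ⟨i, hi⟩
    conv_rhs => rw [← Nat.sub_add_cancel h1]
    rw [pow_succ]
    ring
  · have hA : symmDiff A {i} = insert i A := by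
      ext a
      by_cases hai : a = i
      · subst hai; simp [Finset.mem_symmDiff, hi]
      · simp [Finset.mem_symmDiff, hai]
    rw [hA, Finset.card_insert_of_notMem hi, pow_succ]
    ring

lemma gOp_gOp (i j : I) (T : Finset I) (c : F) :
    gOp F i (gOp F j (Finsupp.single T c)) =
      (c * ((-1 : F) ^ (T.filter (· < j)).card
          * (-1 : F) ^ ((symmDiff T {j}).filter (· < i)).card)) •
        Finsupp.single (symmDiff (symmDiff T {j}) {i}) (1 : F) := by
  rw [gOp_single, map_smul, gOp_single, smul_smul]
  congr 1
  ring

lemma gOp_mul_self (i : I) : gOp F i * gOp F i = (1 : Module.End F (Finset I →₀ F)) := by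
  apply Finsupp.lhom_ext
  intro T c
  rw [Module.End.mul_apply, gOp_gOp, Module.End.one_apply,
    filter_symmDiff_of_not_lt (lt_irrefl i), symmDiff_symmDiff_cancel_right,
    ← pow_add, ← two_mul, pow_mul, neg_one_sq, one_pow, mul_one, Finsupp.smul_single, smul_eq_mul,
    mul_one]

lemma gOp_anticomm_of_lt {i j : I} (hij : i < j) :
    gOp F i * gOp F j = -(gOp F j * gOp F i) := by
  apply Finsupp.lhom_ext
  intro T c
  rw [LinearMap.neg_apply, Module.End.mul_apply, Module.End.mul_apply, gOp_gOp, gOp_gOp]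
  rw [filter_symmDiff_of_not_lt (fun h => absurd (h.trans hij) (lt_irrefl j)),
    filter_symmDiff_of_lt hij, neg_one_pow_card_symmDiff]
  have hsets : symmDiff (symmDiff T {j}) {i} = symmDiff (symmDiff T {i}) {j} := by
    rw [symmDiff_assoc, symmDiff_assoc, symmDiff_comm ({i} : Finset I)]
  rw [hsets, ← neg_smul]
  congr 1
  ring

lemma gOp_anticomm {i j : I} (hij : i ≠ j) :
    gOp F i * gOp F j = -(gOp F j * gOp F i) := by
  rcases hij.lt_or_gt with h | h
  · exact gOp_anticomm_of_lt h
  · rw [gOp_anticomm_of_lt h]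
    exact (neg_neg (gOp F i * gOp F j)).symm

end Aux

section Rep

open Finset CliffordAlgebra

variable {F V I : Type*} [Field F] [AddCommGroup V] [Module F V] [LinearOrder I]
variable (f : QuadraticForm F V) (v : Module.Basis I F V)

lemma psi_cond (hchar : ringChar F ≠ 2)
    (hnorm : ∀ i, f (v i) = 1)
    (horth : ∀ i j, i ≠ j → QuadraticMap.polar f (v i) (v j) = 0) (m : V) :
    (v.constr F (gOp F) m) * (v.constr F (gOp F) m) =
      algebraMap F (Module.End F (Finset I →₀ F)) (f m) := by
  classical
  set c : I →₀ F := v.repr m with hc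
  set s : Finset I := c.support with hs
  have hm : m = ∑ i ∈ s, c i • v i := by
    have h := v.linearCombination_repr m
    rw [Finsupp.linearCombination_apply] at h
    exact h.symm
  have happ : v.constr F (gOp F) m = ∑ i ∈ s, c i • gOp F i := by
    rw [Module.Basis.constr_apply]
    rfl
  -- value of the quadratic form
  have hfm : f m = ∑ i ∈ s, c i * c i := by
    conv_lhs => rw [hm]
    rw [QuadraticMap.map_sum]
    have h2 : ∑ ij ∈ s.sym2 with ¬ ij.IsDiag,
        Sym2.lift ⟨fun i j => QuadraticMap.polar f (c i • v i) (c j • v j),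
          fun _ _ => QuadraticMap.polar_comm _ _ _⟩ ij = 0 := by
      apply Finset.sum_eq_zero
      intro ij hij
      rw [Finset.mem_filter] at hij
      induction ij using Sym2.ind with
      | _ a b =>
        have hab : a ≠ b := by
          simpa using hij.2
        rw [Sym2.lift_mk]
        simp [QuadraticMap.polar_smul_left, QuadraticMap.polar_smul_right, horth a b hab]
    rw [show (∑ ij ∈ s.sym2 with ¬ ij.IsDiag, QuadraticMap.polarSym2 f (Sym2.map (fun i => c i • v i) ij)) = 0 from by rw [← h2]; exact Finset.sum_congr rfl fun ij _ => by induction ij using Sym2.ind; rfl, add_zero]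
    apply Finset.sum_congr rfl
    intro i _
    rw [QuadraticMap.map_smul, hnorm, smul_eq_mul, mul_one]
  rw [happ, hfm, Finset.sum_mul_sum]
  have hterm : ∀ i ∈ s,
      (∑ j ∈ s, (c i • gOp F i) * (c j • gOp F j))
        = ∑ j ∈ s, (c i * c j) • (gOp F i * gOp F j) := fun i _ =>
    Finset.sum_congr rfl fun j _ => smul_mul_smul_comm (c i) (gOp F i) (c j) (gOp F j)
  have key : (∑ i ∈ s, ∑ j ∈ s, (c i * c j) • (gOp F i * gOp F j))
      = ∑ i ∈ s, (c i * c i) • (1 : Module.End F (Finset I →₀ F)) := by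
    have h2smul : (2 : F) • (∑ i ∈ s, ∑ j ∈ s, (c i * c j) • (gOp F i * gOp F j))
        = (2 : F) • (∑ i ∈ s, (c i * c i) • (1 : Module.End F (Finset I →₀ F))) := by
      have hswap : (∑ i ∈ s, ∑ j ∈ s, (c i * c j) • (gOp F i * gOp F j))
          = ∑ i ∈ s, ∑ j ∈ s, (c j * c i) • (gOp F j * gOp F i) := Finset.sum_comm
      have hpair : ∀ i ∈ s,
          ((∑ j ∈ s, (c i * c j) • (gOp F i * gOp F j))
            + ∑ j ∈ s, (c j * c i) • (gOp F j * gOp F i))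
          = (c i * c i) • (1 : Module.End F (Finset I →₀ F))
            + (c i * c i) • (1 : Module.End F (Finset I →₀ F)) := by
        intro i hi
        have hin : ∀ j ∈ s,
            (c i * c j) • (gOp F i * gOp F j) + (c j * c i) • (gOp F j * gOp F i)
            = if j = i then (c i * c i) • (1 : Module.End F (Finset I →₀ F))
                + (c i * c i) • (1 : Module.End F (Finset I →₀ F)) else 0 := by
          intro j _
          by_cases hji : j = i
          · subst hji
            rw [if_pos rfl, gOp_mul_self]
          · rw [if_neg hji, gOp_anticomm (fun h => hji h.symm), mul_comm (c j) (c i)]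
            module
        rw [← Finset.sum_add_distrib, Finset.sum_congr rfl hin,
          Finset.sum_ite_eq' s i, if_pos hi]
      rw [two_smul]
      nth_rewrite 2 [hswap]
      rw [← Finset.sum_add_distrib, Finset.sum_congr rfl hpair, Finset.sum_add_distrib,
        two_smul]
    have h2 : (2 : F) ≠ 0 := Ring.two_ne_zero hchar
    exact smul_right_injective _ h2 h2smul
  rw [Finset.sum_congr rfl hterm, key, Algebra.algebraMap_eq_smul_one, Finset.sum_smul]

/-- The Fock representation of the Clifford algebra. -/
noncomputable def cliffordRep (hchar : ringChar F ≠ 2)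
    (hnorm : ∀ i, f (v i) = 1)
    (horth : ∀ i j, i ≠ j → QuadraticMap.polar f (v i) (v j) = 0) :
    CliffordAlgebra f →ₐ[F] Module.End F (Finset I →₀ F) :=
  CliffordAlgebra.lift f ⟨v.constr F (gOp F), psi_cond f v hchar hnorm horth⟩

lemma cliffordRep_ι (hchar : ringChar F ≠ 2) (hnorm : ∀ i, f (v i) = 1)
    (horth : ∀ i j, i ≠ j → QuadraticMap.polar f (v i) (v j) = 0) (i : I) :
    cliffordRep f v hchar hnorm horth (ι f (v i)) = gOp F i := by
  rw [cliffordRep, CliffordAlgebra.lift_ι_apply, Module.Basis.constr_basis]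

lemma gOp_list_prod (L : List I) (hL : L.Pairwise (· < ·)) :
    ((L.map (gOp F)).prod) (Finsupp.single (∅ : Finset I) (1 : F))
      = Finsupp.single L.toFinset (1 : F) := by
  induction L with
  | nil => simp
  | cons i L ih =>
    have hL' : L.Pairwise (· < ·) := hL.of_cons
    have hlt : ∀ a ∈ L, i < a := fun a ha => (List.pairwise_cons.mp hL).1 a ha
    rw [List.map_cons, List.prod_cons, Module.End.mul_apply, ih hL', gOp_single]
    have hfilter : L.toFinset.filter (· < i) = ∅ := by
      apply Finset.filter_eq_empty_iff.mpr
      intro a ha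
      exact not_lt_of_gt (hlt a (List.mem_toFinset.mp ha))
    have hi : i ∉ L.toFinset := by
      intro h
      exact lt_irrefl i (hlt i (List.mem_toFinset.mp h))
    have hsd : symmDiff L.toFinset {i} = insert i L.toFinset := by
      ext a
      by_cases hai : a = i
      · subst hai; simp [Finset.mem_symmDiff, hi]
      · simp [Finset.mem_symmDiff, hai]
    rw [hfilter, hsd, List.toFinset_cons]
    simp

lemma cliffordRep_prod (hchar : ringChar F ≠ 2) (hnorm : ∀ i, f (v i) = 1)
    (horth : ∀ i j, i ≠ j → QuadraticMap.polar f (v i) (v j) = 0) (S : Finset I) :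
    cliffordRep f v hchar hnorm horth (cliffordFinsetProd f (⇑v) S)
      (Finsupp.single (∅ : Finset I) (1 : F)) = Finsupp.single S (1 : F) := by
  rw [cliffordFinsetProd, map_list_prod, List.map_map]
  have hmap : (cliffordRep f v hchar hnorm horth) ∘ (fun i => ι f (v i)) = gOp F := by
    funext i
    exact cliffordRep_ι f v hchar hnorm horth i
  rw [hmap, gOp_list_prod _ (Finset.sortedLT_sort S).pairwise, Finset.sort_toFinset]

/-- Linear independence of the ordered products, in the form we need. -/
lemma cliffordFinsetProd_indep (hchar : ringChar F ≠ 2) (hnorm : ∀ i, f (v i) = 1)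
    (horth : ∀ i j, i ≠ j → QuadraticMap.polar f (v i) (v j) = 0)
    (𝒯 : Finset (Finset I)) (β : Finset I → F)
    (h : ∑ S ∈ 𝒯, β S • cliffordFinsetProd f (⇑v) S = 0) :
    ∀ S₀ ∈ 𝒯, β S₀ = 0 := by
  intro S₀ hS₀
  have h1 := congrArg (fun x => cliffordRep f v hchar hnorm horth x
      (Finsupp.single (∅ : Finset I) (1 : F))) h
  simp only [map_sum, map_smul, LinearMap.coe_sum, Finset.sum_apply, LinearMap.smul_apply,
    map_zero, LinearMap.zero_apply] at h1
  rw [Finset.sum_congr rfl (fun S _ => by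
    rw [cliffordRep_prod f v hchar hnorm horth S])] at h1
  have h2 := congrArg (fun g : Finset I →₀ F => g S₀) h1
  simp only [Finsupp.coe_zero, Pi.zero_apply] at h2
  rw [Finsupp.finset_sum_apply] at h2
  simp only [Finsupp.smul_apply, Finsupp.single_apply, smul_eq_mul] at h2
  rw [Finset.sum_congr rfl (fun S _ => by
      rw [mul_ite, mul_one, mul_zero]),
    Finset.sum_ite_eq' 𝒯 S₀ β, if_pos hS₀] at h2
  exact h2

lemma mul_list_prod (hnorm : ∀ i, f (v i) = 1)
    (horth : ∀ i j, i ≠ j → QuadraticMap.polar f (v i) (v j) = 0) (i : I) (L : List I) :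
    ι f (v i) * (L.map fun j => ι f (v j)).prod =
      ((-1 : F) ^ (L.countP fun j => j ≠ i)) • ((L.map fun j => ι f (v j)).prod * ι f (v i)) := by
  induction L with
  | nil => simp
  | cons j L ih =>
    rw [List.map_cons, List.prod_cons]
    by_cases hj : j = i
    · subst hj
      have hcount : ((j :: L).countP fun k => k ≠ j) = L.countP fun k => k ≠ j := by
        rw [List.countP_cons_of_neg]
        simp
      have h1 : ι f (v j) * (ι f (v j) * (L.map fun k => ι f (v k)).prod)
          = ((L.map fun k => ι f (v k)).prod * ι f (v j)) * ι f (v j) := by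
        rw [← mul_assoc, CliffordAlgebra.ι_sq_scalar, mul_assoc, CliffordAlgebra.ι_sq_scalar]
        exact Algebra.commutes _ _
      rw [hcount, h1, ih, smul_mul_assoc, smul_smul, ← pow_add, ← two_mul, pow_mul,
        neg_one_sq, one_pow, one_smul]
    · have hanti : ι f (v i) * ι f (v j) = -(ι f (v j) * ι f (v i)) := by
        have hh := CliffordAlgebra.ι_mul_ι_add_swap (Q := f) (v i) (v j)
        rw [horth i j (fun h => hj h.symm), map_zero] at hh
        exact eq_neg_of_add_eq_zero_left hh
      have hcount : ((j :: L).countP fun k => k ≠ i) = (L.countP fun k => k ≠ i) + 1 := by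
        rw [List.countP_cons_of_pos]
        simp [hj]
      rw [← mul_assoc, hanti, neg_mul, mul_assoc, ih, mul_smul_comm, ← mul_assoc,
        hcount, pow_succ, mul_neg_one, ← neg_smul]

end Rep

theorem inner_derivations_even_sets_linearly_independent
    (F : Type*) [Field F] (hchar : ringChar F ≠ 2)
    (V : Type*) [AddCommGroup V] [Module F V]
    (I : Type*) [LinearOrder I]
    (f : QuadraticForm F V) (v : Module.Basis I F V)
    (hnorm : ∀ i, f (v i) = 1)
    (horth : ∀ i j, i ≠ j → QuadraticMap.polar f (v i) (v j) = 0)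
    (𝒮 : Finset (Finset I))
    (h𝒮 : ∀ S ∈ 𝒮, S.Nonempty ∧ Even S.card)
    (α : Finset I → F)
    (hzero : ∀ x : CliffordAlgebra f,
      ∑ S ∈ 𝒮, α S • (cliffordFinsetProd f (⇑v) S * x - x * cliffordFinsetProd f (⇑v) S) = 0) :
    ∀ S ∈ 𝒮, α S = 0 := by
  classical
  intro S₀ hS₀
  obtain ⟨⟨i₀, hi₀⟩, -⟩ := h𝒮 S₀ hS₀
  set w : CliffordAlgebra f := CliffordAlgebra.ι f (v i₀) with hw
  set P : Finset I → CliffordAlgebra f := cliffordFinsetProd f (⇑v) with hP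
  have hcount : ∀ S : Finset I, ((S.sort (· ≤ ·)).countP fun j => j ≠ i₀)
      = (S.filter (· ≠ i₀)).card := by
    intro S
    have h1 : (S.filter (· ≠ i₀)).card
        = Multiset.countP (fun j => j ≠ i₀) S.val := by
      rw [Multiset.countP_eq_card_filter]
      rfl
    rw [h1, ← Finset.sort_eq S (· ≤ ·), Multiset.coe_countP]
  have hww : w * w = 1 := by
    rw [hw, CliffordAlgebra.ι_sq_scalar, hnorm, map_one]
  have hkey : ∀ S ∈ 𝒮, α S • (P S * w - w * P S)
      = if i₀ ∈ S then (2 * α S) • (P S * w) else 0 := by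
    intro S hS
    obtain ⟨-, heven⟩ := h𝒮 S hS
    have hcomm := mul_list_prod f v hnorm horth i₀ (S.sort (· ≤ ·))
    have hPS : P S = ((S.sort (· ≤ ·)).map fun j => CliffordAlgebra.ι f (v j)).prod := rfl
    rw [← hPS, ← hw, hcount S] at hcomm
    by_cases hmem : i₀ ∈ S
    · have hfilter : (S.filter (· ≠ i₀)) = S.erase i₀ := Finset.filter_ne' S i₀
      have hodd : Odd ((S.filter (· ≠ i₀)).card) := by
        rw [hfilter, Finset.card_erase_of_mem hmem]
        exact Nat.Even.sub_odd (Finset.card_pos.mpr ⟨i₀, hmem⟩) heven odd_one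
      rw [hodd.neg_one_pow, neg_one_smul] at hcomm
      rw [if_pos hmem, hcomm, sub_neg_eq_add, ← two_smul F, smul_smul, mul_comm (α S) 2]
    · have hfilter : (S.filter (· ≠ i₀)) = S := by
        apply Finset.filter_true_of_mem
        intro a ha h
        exact hmem (h ▸ ha)
      have heven' : Even ((S.filter (· ≠ i₀)).card) := by rw [hfilter]; exact heven
      rw [heven'.neg_one_pow, one_smul] at hcomm
      rw [if_neg hmem, hcomm, sub_self, smul_zero]
  have E := hzero w
  rw [Finset.sum_congr rfl hkey, Finset.sum_ite, Finset.sum_const_zero, add_zero] at E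
  have E2 := congrArg (fun x => x * w) E
  simp only [Finset.sum_mul, smul_mul_assoc, mul_assoc, hww, mul_one, zero_mul] at E2
  have hfin := cliffordFinsetProd_indep f v hchar hnorm horth
    (𝒮.filter fun S => i₀ ∈ S) (fun S => 2 * α S) E2 S₀ (Finset.mem_filter.mpr ⟨hS₀, hi₀⟩)
  rcases mul_eq_zero.mp hfin with h | h
  · exact absurd h (Ring.two_ne_zero hchar)
  · exact h
end

section
/- Let A be a unital algebra over a field F such that every finite subset of A lies in a unital subalgebra isomorphic to a matrix algebra Mₙ(F), and suppose char F is coprime to all n for which A contains a unital subalgebra isomorphic to Mₙ(F). Then there exists a unique linear functional tr : A → F with tr(ab) = tr(ba) for all a,b ∈ A and tr(1) = 1. -/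
open Matrix

lemma matrix_trace_unique {F : Type*} [Field F] {n : ℕ} (hn : (n : F) ≠ 0)
    (f : Matrix (Fin n) (Fin n) F →ₗ[F] F)
    (hf : ∀ x y, f (x * y) = f (y * x)) (h1 : f 1 = 1) :
    ∀ M, f M = (n : F)⁻¹ * M.trace := by
  have hn' : 0 < n := by
    rcases Nat.eq_zero_or_pos n with h | h
    · exact absurd (by simp [h]) hn
    · exact h
  -- off-diagonal
  have hoff : ∀ i j : Fin n, i ≠ j → f (Matrix.single i j 1) = 0 := by
    intro i j hij
    have := hf (Matrix.single i i 1) (Matrix.single i j 1)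
    rw [single_mul_single_same, single_mul_single_of_ne (h := Ne.symm hij)] at this
    simpa using this
  -- diagonal entries all equal
  have hdiag : ∀ i : Fin n, f (Matrix.single i i 1) = (n : F)⁻¹ := by
    have heq : ∀ i j : Fin n, f (Matrix.single i i 1) = f (Matrix.single j j 1) := by
      intro i j
      have := hf (Matrix.single i j 1) (Matrix.single j i 1)
      rw [single_mul_single_same, single_mul_single_same] at this
      simpa using this
    have hone : (1 : Matrix (Fin n) (Fin n) F) = ∑ i : Fin n, Matrix.single i i 1 := by
      ext a b
      simp only [Matrix.sum_apply, Matrix.single, Matrix.of_apply, Matrix.one_apply]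
      by_cases h : a = b
      · subst h; rw [Finset.sum_eq_single a] <;> simp
      · rw [if_neg h, Finset.sum_eq_zero]
        intro x _
        by_cases hx : x = a
        · subst hx; simp [h]
        · simp [hx]
    intro i
    have hsum : (n : F) * f (Matrix.single i i 1) = 1 := by
      calc (n : F) * f (Matrix.single i i 1)
          = ∑ _j : Fin n, f (Matrix.single i i 1) := by
            simp [Finset.sum_const, nsmul_eq_mul]
        _ = ∑ j : Fin n, f (Matrix.single j j 1) := by
            exact Finset.sum_congr rfl fun j _ => heq i j
        _ = f 1 := by rw [hone, map_sum]
        _ = 1 := h1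
    have : f (Matrix.single i i 1) = (n:F)⁻¹ * ((n:F) * f (Matrix.single i i 1)) := by
      rw [← mul_assoc, inv_mul_cancel₀ hn, one_mul]
    rw [this, hsum, mul_one]
  intro M
  have hM := matrix_eq_sum_single M
  have : f M = ∑ i : Fin n, ∑ j : Fin n, M i j * f (Matrix.single i j 1) := by
    conv_lhs => rw [hM]
    rw [map_sum]
    refine Finset.sum_congr rfl fun i _ => ?_
    rw [map_sum]
    refine Finset.sum_congr rfl fun j _ => ?_
    have : Matrix.single i j (M i j) = M i j • Matrix.single i j 1 := by
      ext a b; simp [Matrix.single, smul_ite]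
    rw [this, _root_.map_smul, smul_eq_mul]
  rw [this]
  have : ∀ i : Fin n, ∑ j : Fin n, M i j * f (Matrix.single i j 1)
      = M i i * (n : F)⁻¹ := by
    intro i
    rw [Finset.sum_eq_single i]
    · rw [hdiag]
    · intro j _ hj; rw [hoff i j (Ne.symm hj), mul_zero]
    · simp
  simp only [this, Matrix.trace]
  rw [Finset.mul_sum]
  exact Finset.sum_congr rfl fun i _ => by rw [mul_comm]; rfl

lemma subalg_le_of_units {F : Type*} [Field F] {A : Type*} [Ring A] [Algebra F A]
    {B C : Subalgebra F A} {n : ℕ} (e : B ≃ₐ[F] Matrix (Fin n) (Fin n) F)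
    (h : ∀ i j : Fin n, ((e.symm (Matrix.single i j 1)) : A) ∈ C) : B ≤ C := by
  intro x hx
  have hxx : x = ((⟨x, hx⟩ : B) : A) := rfl
  rw [hxx, ← e.symm_apply_apply ⟨x, hx⟩]
  set M := e ⟨x, hx⟩ with hMdef
  have hM : M = ∑ i, ∑ j, (M i j) • Matrix.single i j (1 : F) := by
    conv_lhs => rw [matrix_eq_sum_single M]
    refine Finset.sum_congr rfl fun i _ => Finset.sum_congr rfl fun j _ => ?_
    ext a b; simp [Matrix.single, smul_ite]
  rw [hM]
  rw [map_sum]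
  push_cast
  refine Subalgebra.sum_mem _ fun i _ => ?_
  rw [map_sum]
  push_cast
  refine Subalgebra.sum_mem _ fun j _ => ?_
  rw [_root_.map_smul]
  exact Subalgebra.smul_mem _ (h i j) _

lemma trace_compat {F : Type*} [Field F] {A : Type*} [Ring A] [Algebra F A]
    {B₁ B₂ : Subalgebra F A} (hle : B₁ ≤ B₂) {n₁ n₂ : ℕ}
    (h₁ : (n₁ : F) ≠ 0) (h₂ : (n₂ : F) ≠ 0)
    (e₁ : B₁ ≃ₐ[F] Matrix (Fin n₁) (Fin n₁) F)
    (e₂ : B₂ ≃ₐ[F] Matrix (Fin n₂) (Fin n₂) F)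
    (a : A) (ha : a ∈ B₁) :
    (n₁ : F)⁻¹ * (e₁ ⟨a, ha⟩).trace = (n₂ : F)⁻¹ * (e₂ ⟨a, hle ha⟩).trace := by
  set g : Matrix (Fin n₁) (Fin n₁) F →ₗ[F] F :=
    (n₂ : F)⁻¹ • ((Matrix.traceLinearMap (Fin n₂) F F).comp
      (e₂.toLinearMap.comp (((Subalgebra.inclusion hle).toLinearMap).comp
        e₁.symm.toLinearMap))) with hg
  have hgval : ∀ M, g M = (n₂ : F)⁻¹ * (e₂ (Subalgebra.inclusion hle (e₁.symm M))).trace := by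
    intro M; simp [hg, Matrix.traceLinearMap]
  have hmul : ∀ x y : Matrix (Fin n₁) (Fin n₁) F, g (x * y) = g (y * x) := by
    intro x y
    rw [hgval, hgval]; simp only [_root_.map_mul]; rw [Matrix.trace_mul_comm]
  have hone : g 1 = 1 := by
    rw [hgval, _root_.map_one, _root_.map_one, _root_.map_one, Matrix.trace_one]
    simp [inv_mul_cancel₀ h₂]
  have := matrix_trace_unique h₁ g hmul hone (e₁ ⟨a, ha⟩)
  rw [hgval, e₁.symm_apply_apply] at this
  have hincl : Subalgebra.inclusion hle (⟨a, ha⟩ : B₁) = ⟨a, hle ha⟩ := rfl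
  rw [hincl] at this
  rw [← this, mul_comm]

theorem locally_matrix_algebra_unique_trace
    (F : Type*) [Field F]
    (A : Type*) [Ring A] [Algebra F A]
    (hloc : ∀ s : Finset A, ∃ (n : ℕ) (B : Subalgebra F A), 0 < n ∧ (↑s : Set A) ⊆ B ∧
      Nonempty (B ≃ₐ[F] Matrix (Fin n) (Fin n) F))
    (hcop : ∀ n : ℕ, 0 < n → (∃ B : Subalgebra F A,
        Nonempty (B ≃ₐ[F] Matrix (Fin n) (Fin n) F)) →
      ¬ ((ringChar F : ℕ) ∣ n)) :
    ∃! tr : A →ₗ[F] F,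
      (∀ a b : A, tr (a * b) = tr (b * a)) ∧ tr 1 = 1 := by
  classical
  choose nn BB hpos hsub hiso using hloc
  have hnz : ∀ (n : ℕ), 0 < n → ∀ (B : Subalgebra F A),
      (B ≃ₐ[F] Matrix (Fin n) (Fin n) F) → (n : F) ≠ 0 := by
    intro n hn B eB h0
    exact hcop n hn ⟨B, ⟨eB⟩⟩ ((CharP.cast_eq_zero_iff F (ringChar F) n).mp h0)
  set e : ∀ s : Finset A, (BB s ≃ₐ[F] Matrix (Fin (nn s)) (Fin (nn s)) F) :=
    fun s => (hiso s).some with he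
  have hnzs : ∀ s : Finset A, ((nn s : F)) ≠ 0 := fun s => hnz _ (hpos s) _ (e s)
  set τ : A → F := fun a =>
    ((nn {a} : F))⁻¹ * ((e {a}) ⟨a, hsub {a} (by simp)⟩).trace with hτ
  have indep : ∀ (n : ℕ), 0 < n → ∀ (B : Subalgebra F A)
      (eB : B ≃ₐ[F] Matrix (Fin n) (Fin n) F)
      (a : A) (ha : a ∈ B), τ a = (n : F)⁻¹ * (eB ⟨a, ha⟩).trace := by
    intro n hn B eB a ha
    set s₁ : Finset A := {a} with hs₁
    set s : Finset A := (Finset.univ.image fun p : Fin (nn s₁) × Fin (nn s₁) =>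
        (((e s₁).symm (Matrix.single p.1 p.2 1)) : A)) ∪
      (Finset.univ.image fun p : Fin n × Fin n =>
        ((eB.symm (Matrix.single p.1 p.2 1)) : A)) with hs
    have hle₁ : BB s₁ ≤ BB s := by
      refine subalg_le_of_units (e s₁) (fun i j => hsub s ?_)
      simp only [hs, Finset.coe_union, Set.mem_union, Finset.coe_image, Set.mem_image]
      exact Or.inl ⟨(i, j), by simp, rfl⟩
    have hle₂ : B ≤ BB s := by
      refine subalg_le_of_units eB (fun i j => hsub s ?_)
      simp only [hs, Finset.coe_union, Set.mem_union, Finset.coe_image, Set.mem_image]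
      exact Or.inr ⟨(i, j), by simp, rfl⟩
    have ha₁ : a ∈ BB s₁ := hsub s₁ (by simp [hs₁])
    calc τ a = (nn s₁ : F)⁻¹ * ((e s₁) ⟨a, ha₁⟩).trace := rfl
      _ = (nn s : F)⁻¹ * ((e s) ⟨a, hle₁ ha₁⟩).trace :=
          trace_compat hle₁ (hnzs s₁) (hnzs s) (e s₁) (e s) a ha₁
      _ = (n : F)⁻¹ * (eB ⟨a, ha⟩).trace :=
          (trace_compat hle₂ (hnz n hn B eB) (hnzs s) eB (e s) a ha).symm
  have τadd : ∀ a b : A, τ (a + b) = τ a + τ b := by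
    intro a b
    set s : Finset A := {a, b} with hs
    have haB : a ∈ BB s := hsub s (by simp [hs])
    have hbB : b ∈ BB s := hsub s (by simp [hs])
    have hab : a + b ∈ BB s := add_mem haB hbB
    rw [indep _ (hpos s) _ (e s) a haB, indep _ (hpos s) _ (e s) b hbB,
      indep _ (hpos s) _ (e s) (a + b) hab]
    have : (⟨a + b, hab⟩ : BB s) = ⟨a, haB⟩ + ⟨b, hbB⟩ := rfl
    rw [this, map_add, Matrix.trace_add, mul_add]
  have τsmul : ∀ (c : F) (a : A), τ (c • a) = c * τ a := by
    intro c a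
    set s : Finset A := {a} with hs
    have haB : a ∈ BB s := hsub s (by simp [hs])
    have hca : c • a ∈ BB s := Subalgebra.smul_mem _ haB c
    rw [indep _ (hpos s) _ (e s) a haB, indep _ (hpos s) _ (e s) (c • a) hca]
    have : (⟨c • a, hca⟩ : BB s) = c • ⟨a, haB⟩ := rfl
    rw [this, _root_.map_smul, Matrix.trace_smul, smul_eq_mul]
    ring
  set tr : A →ₗ[F] F :=
    { toFun := τ, map_add' := τadd, map_smul' := fun c a => τsmul c a } with htr
  refine ⟨tr, ⟨?_, ?_⟩, ?_⟩
  · intro a b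
    set s : Finset A := {a, b} with hs
    have haB : a ∈ BB s := hsub s (by simp [hs])
    have hbB : b ∈ BB s := hsub s (by simp [hs])
    have hab : a * b ∈ BB s := mul_mem haB hbB
    have hba : b * a ∈ BB s := mul_mem hbB haB
    show τ (a * b) = τ (b * a)
    rw [indep _ (hpos s) _ (e s) (a * b) hab, indep _ (hpos s) _ (e s) (b * a) hba]
    have h1 : (⟨a * b, hab⟩ : BB s) = ⟨a, haB⟩ * ⟨b, hbB⟩ := rfl
    have h2 : (⟨b * a, hba⟩ : BB s) = ⟨b, hbB⟩ * ⟨a, haB⟩ := rfl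
    rw [h1, h2, _root_.map_mul, _root_.map_mul, Matrix.trace_mul_comm]
  · show τ 1 = 1
    set s : Finset A := {1} with hs
    have h1B : (1 : A) ∈ BB s := one_mem _
    rw [indep _ (hpos s) _ (e s) 1 h1B]
    have : (⟨(1 : A), h1B⟩ : BB s) = 1 := rfl
    rw [this, _root_.map_one, Matrix.trace_one]
    simp [inv_mul_cancel₀ (hnzs s)]
  · intro tr' ⟨htr', h1'⟩
    ext a
    set s : Finset A := {a} with hs
    have haB : a ∈ BB s := hsub s (by simp [hs])
    set f : Matrix (Fin (nn s)) (Fin (nn s)) F →ₗ[F] F :=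
      tr'.comp (((BB s).val.toLinearMap).comp (e s).symm.toLinearMap) with hf
    have hfval : ∀ M, f M = tr' (((e s).symm M : BB s) : A) := fun M => rfl
    have hfmul : ∀ x y, f (x * y) = f (y * x) := by
      intro x y
      rw [hfval, hfval]
      simp only [_root_.map_mul]
      exact htr' _ _
    have hf1 : f 1 = 1 := by
      rw [hfval]
      simp only [_root_.map_one]
      exact h1'
    have := matrix_trace_unique (hnzs s) f hfmul hf1 ((e s) ⟨a, haB⟩)
    rw [hfval, (e s).symm_apply_apply] at this
    have hrhs : tr a = (nn s : F)⁻¹ * ((e s) ⟨a, haB⟩).trace :=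
      indep _ (hpos s) _ (e s) a haB
    rw [← hrhs] at this
    exact this
end
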